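/- arXiv:2503.18425 — 4 statements merged into one kernel-verified Lean document; each statement's English description precedes it below -/
import Mathlib

section
/- Let G be a weighted undirected graph with a finite set S of sites carrying additive weights ω, and suppose all additively weighted distances from sites to vertices are pairwise distinct (no ties). If a vertex v belongs to the Voronoi cell Vor(s) of site s, then every vertex z on a shortest path from s to v also belongs to Vor(s). -/
/-- The total weight of a walk in a weighted graph: the sum of the weights of its edges. -/
def walkWeight {V : Type} {G : SimpleGraph V} (w : Sym2 V → ℝ) {a b : V} (p : G.Walk a b) : ℝ :=
  (p.edges.map w).sum

lemma walkWeight_append {V : Type} {G : SimpleGraph V} (w : Sym2 V → ℝ) {a b c : V}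
    (p : G.Walk a b) (q : G.Walk b c) :
    walkWeight w (p.append q) = walkWeight w p + walkWeight w q := by
  simp [walkWeight, SimpleGraph.Walk.edges_append]

/-- If `v` belongs to the additively weighted Voronoi cell of a site `s`, then so does every
vertex `z` on a shortest path from `s` to `v`. -/
theorem stmt2 {V : Type} (G : SimpleGraph V) (w : Sym2 V → ℝ)
    (hw : ∀ e, 0 ≤ w e)
    (dist : V → V → ℝ)
    (hdist : ∀ a b : V, IsLeast {x : ℝ | ∃ p : G.Walk a b, walkWeight w p = x} (dist a b))
    (S : Finset V) (ω : V → ℝ) (hω : ∀ s ∈ S, 0 ≤ ω s)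
    (hties : ∀ v : V, ∀ s ∈ S, ∀ t ∈ S, s ≠ t → ω s + dist s v ≠ ω t + dist t v)
    (s : V) (hs : s ∈ S) (v z : V)
    (hv : ∀ t ∈ S, t ≠ s → ω s + dist s v < ω t + dist t v)
    (hz : dist s z + dist z v = dist s v) :
    ∀ t ∈ S, t ≠ s → ω s + dist s z < ω t + dist t z := by
  intro t ht hts
  by_contra h
  push_neg at h
  have hne : ω t + dist t z ≠ ω s + dist s z := hties z t ht s hs hts
  have hlt : ω t + dist t z < ω s + dist s z := lt_of_le_of_ne h hne
  -- triangle inequality: dist t v ≤ dist t z + dist z v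
  obtain ⟨p, hp⟩ := (hdist t z).1
  obtain ⟨q, hq⟩ := (hdist z v).1
  have htri : dist t v ≤ dist t z + dist z v := by
    have := (hdist t v).2 ⟨p.append q, walkWeight_append w p q⟩
    rw [hp, hq] at this
    exact this
  have : ω t + dist t v < ω s + dist s v := by
    calc ω t + dist t v ≤ ω t + (dist t z + dist z v) := by linarith
    _ < ω s + dist s z + dist z v := by linarith
    _ = ω s + dist s v := by linarith
  exact absurd (hv t ht hts) (by linarith)
end

section
/- Let G be a weighted undirected graph with sites s1 ≠ s2 carrying additive weights, and suppose vertex u1 belongs to the (two-site) Voronoi cell of s1 and vertex u2 belongs to the Voronoi cell of s2. Then any shortest path from s1 to u1 and any shortest path from s2 to u2 are vertex-disjoint. -/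
/-- If `u1` is in the (two-site) Voronoi cell of `s1` and `u2` in that of `s2`, then any
shortest path from `s1` to `u1` and any shortest path from `s2` to `u2` are vertex-disjoint. -/
theorem stmt3 {V : Type} (G : SimpleGraph V) (w : Sym2 V → ℝ)
    (hw : ∀ e, 0 ≤ w e)
    (dist : V → V → ℝ)
    (hdist : ∀ a b : V, IsLeast {x : ℝ | ∃ p : G.Walk a b, walkWeight w p = x} (dist a b))
    (s1 s2 u1 u2 : V) (hs : s1 ≠ s2) (ω1 ω2 : ℝ) (hω1 : 0 ≤ ω1) (hω2 : 0 ≤ ω2)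
    (hu1 : ω1 + dist s1 u1 < ω2 + dist s2 u1)
    (hu2 : ω2 + dist s2 u2 < ω1 + dist s1 u2)
    (p1 : G.Walk s1 u1) (hp1 : p1.IsPath)
    (hp1w : walkWeight w p1 = dist s1 u1)
    (hp1z : ∀ z ∈ p1.support, dist s1 z + dist z u1 = dist s1 u1)
    (p2 : G.Walk s2 u2) (hp2 : p2.IsPath)
    (hp2w : walkWeight w p2 = dist s2 u2)
    (hp2z : ∀ z ∈ p2.support, dist s2 z + dist z u2 = dist s2 u2) :
    ∀ z ∈ p1.support, z ∉ p2.support := by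
  have tri : ∀ a b c : V, dist a c ≤ dist a b + dist b c := by
    intro a b c
    obtain ⟨q, hq⟩ := (hdist a b).1
    obtain ⟨r, hr⟩ := (hdist b c).1
    have hmem : walkWeight w (q.append r) ∈
        {x : ℝ | ∃ p : G.Walk a c, walkWeight w p = x} := ⟨q.append r, rfl⟩
    have := (hdist a c).2 hmem
    have happ : walkWeight w (q.append r) = walkWeight w q + walkWeight w r := by
      simp [walkWeight, SimpleGraph.Walk.edges_append]
    rw [happ, hq, hr] at this
    exact this
  intro z hz1 hz2
  have h1 := hp1z z hz1
  have h2 := hp2z z hz2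
  have t1 : dist s2 u1 ≤ dist s2 z + dist z u1 := tri s2 z u1
  have t2 : dist s1 u2 ≤ dist s1 z + dist z u2 := tri s1 z u2
  have A : ω1 + dist s1 z < ω2 + dist s2 z := by
    have := hu1
    rw [← h1] at this
    linarith
  have B : ω2 + dist s2 z < ω1 + dist s1 z := by
    have := hu2
    rw [← h2] at this
    linarith
  linarith
end

section
/- Let G be a weighted undirected graph, let s1, s2 be vertices, and let R = (z_0 = s1, …, z_k = v) be a shortest path from s1 to v. Suppose dist(s1,s1) < dist(s2,s1) and dist(s2,v) < dist(s1,v). Then there exists an index m, 0 < m ≤ k, such that dist(s1,z_i) < dist(s2,z_i) for all i < m and dist(s2,z_i) < dist(s1,z_i) for all i ≥ m, provided dist(s1,z_i) ≠ dist(s2,z_i) for all i. -/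
lemma walkWeight_nil {V : Type} {G : SimpleGraph V} (w : Sym2 V → ℝ) {a : V} :
    walkWeight w (SimpleGraph.Walk.nil : G.Walk a a) = 0 := rfl

lemma walkWeight_cons {V : Type} {G : SimpleGraph V} (w : Sym2 V → ℝ) {a b c : V}
    (h : G.Adj a b) (q : G.Walk b c) :
    walkWeight w (SimpleGraph.Walk.cons h q) = w s(a, b) + walkWeight w q := by
  simp [walkWeight]

lemma support_get_eq_getVert {V : Type} {G : SimpleGraph V} :
    ∀ {a v : V} (p : G.Walk a v) (i : ℕ) (h : i < p.support.length),
      p.support.get ⟨i, h⟩ = p.getVert i := by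
  intro a v p
  induction p with
  | nil =>
    intro i h
    have hi : i = 0 := by simpa using h
    subst hi; rfl
  | cons hadj q ih =>
    intro i h
    cases i with
    | zero => rfl
    | succ j =>
      simp only [SimpleGraph.Walk.support_cons, List.get_cons_succ,
        SimpleGraph.Walk.getVert_cons_succ]
      exact ih j (by simpa [SimpleGraph.Walk.support_cons] using h)

section
variable {V : Type} {G : SimpleGraph V} {w : Sym2 V → ℝ} {dist : V → V → ℝ}

lemma dist_le_walk (hdist : ∀ a b : V, IsLeast {x : ℝ | ∃ p : G.Walk a b, walkWeight w p = x} (dist a b))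
    {a b : V} (p : G.Walk a b) : dist a b ≤ walkWeight w p :=
  (hdist a b).2 ⟨p, rfl⟩

lemma exists_dist_walk (hdist : ∀ a b : V, IsLeast {x : ℝ | ∃ p : G.Walk a b, walkWeight w p = x} (dist a b))
    (a b : V) : ∃ p : G.Walk a b, walkWeight w p = dist a b := (hdist a b).1

/-- triangle via a single edge -/
lemma dist_triangle_edge (hdist : ∀ a b : V, IsLeast {x : ℝ | ∃ p : G.Walk a b, walkWeight w p = x} (dist a b))
    (s : V) {a b : V} (h : G.Adj a b) : dist s b ≤ dist s a + w s(a, b) := by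
  obtain ⟨q, hq⟩ := exists_dist_walk hdist s a
  have := dist_le_walk hdist (q.append (SimpleGraph.Walk.cons h SimpleGraph.Walk.nil))
  rw [walkWeight_append, walkWeight_cons, walkWeight_nil, hq] at this
  linarith

/-- Main step lemma along a suffix of a shortest path. -/
lemma chain_step (hdist : ∀ a b : V, IsLeast {x : ℝ | ∃ p : G.Walk a b, walkWeight w p = x} (dist a b))
    (s1 s2 v : V) :
    ∀ {a : V} (p : G.Walk a v), dist s1 a + walkWeight w p ≤ dist s1 v →
      ∀ i : ℕ, i < p.length →
        dist s2 (p.getVert i) < dist s1 (p.getVert i) →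
        dist s2 (p.getVert (i + 1)) < dist s1 (p.getVert (i + 1)) := by
  intro a p
  induction p with
  | nil => intro _ i hi; simp at hi
  | @cons a b c hadj q ih =>
    intro hinv i hi hlt
    rw [walkWeight_cons] at hinv
    have htri : dist s1 b ≤ dist s1 a + w s(a, b) := dist_triangle_edge hdist s1 hadj
    cases i with
    | zero =>
      -- need: dist s2 b < dist s1 b, knowing dist s2 a < dist s1 a
      simp only [SimpleGraph.Walk.getVert_zero] at hlt
      rw [SimpleGraph.Walk.getVert_cons_succ, SimpleGraph.Walk.getVert_zero]
      have h1 : dist s1 c ≤ dist s1 b + walkWeight w q := by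
        obtain ⟨r, hr⟩ := exists_dist_walk hdist s1 b
        have := dist_le_walk hdist (r.append q)
        rw [walkWeight_append, hr] at this
        linarith
      have h2 : dist s2 b ≤ dist s2 a + w s(a, b) := dist_triangle_edge hdist s2 hadj
      -- from hinv and h1 : dist s1 a + w ≤ dist s1 b
      linarith
    | succ j =>
      rw [SimpleGraph.Walk.getVert_cons_succ] at hlt
      rw [SimpleGraph.Walk.getVert_cons_succ]
      exact ih (by linarith) j (by simpa [SimpleGraph.Walk.length_cons, Nat.succ_lt_succ_iff] using hi) hlt

end

/-- Along a shortest path `(z_0 = s1, …, z_k = v)` with `s1` strictly closer to itself and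
`s2` strictly closer to `v`, and no ties along the path, there is a single switch index `m`:
before `m` the vertices are strictly closer to `s1`, from `m` on strictly closer to `s2`. -/
theorem stmt5 {V : Type} (G : SimpleGraph V) (w : Sym2 V → ℝ)
    (hw : ∀ e, 0 ≤ w e)
    (dist : V → V → ℝ)
    (hdist : ∀ a b : V, IsLeast {x : ℝ | ∃ p : G.Walk a b, walkWeight w p = x} (dist a b))
    (s1 s2 v : V) (p : G.Walk s1 v) (hp : walkWeight w p = dist s1 v)
    (h1 : dist s1 s1 < dist s2 s1) (h2 : dist s2 v < dist s1 v)
    (hties : ∀ z ∈ p.support, dist s1 z ≠ dist s2 z) :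
    ∃ m : ℕ, 0 < m ∧ m ≤ p.length ∧
      (∀ i : ℕ, ∀ h : i < p.support.length, i < m →
        dist s1 (p.support.get ⟨i, h⟩) < dist s2 (p.support.get ⟨i, h⟩)) ∧
      (∀ i : ℕ, ∀ h : i < p.support.length, m ≤ i →
        dist s2 (p.support.get ⟨i, h⟩) < dist s1 (p.support.get ⟨i, h⟩)) := by
  classical
  have hQlen : dist s2 (p.getVert p.length) < dist s1 (p.getVert p.length) := by
    rw [SimpleGraph.Walk.getVert_length]; exact h2
  have hex : ∃ i : ℕ, dist s2 (p.getVert i) < dist s1 (p.getVert i) := ⟨p.length, hQlen⟩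
  set m := Nat.find hex with hm
  have hspec := Nat.find_spec hex
  have hdss : dist s1 s1 ≤ 0 := by
    simpa [walkWeight_nil] using dist_le_walk hdist (SimpleGraph.Walk.nil : G.Walk s1 s1)
  have hinv : dist s1 s1 + walkWeight w p ≤ dist s1 v := by rw [hp]; linarith
  have hm0 : 0 < m := by
    rcases Nat.eq_zero_or_pos m with h | h
    · exfalso
      have := hspec
      rw [← hm] at this
      rw [h] at this
      rw [SimpleGraph.Walk.getVert_zero] at this
      linarith
    · exact h
  have hmlen : m ≤ p.length := Nat.find_le hQlen
  -- all i ≥ m satisfy Q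
  have hQup : ∀ i : ℕ, m ≤ i → dist s2 (p.getVert i) < dist s1 (p.getVert i) := by
    intro i hi
    induction i, hi using Nat.le_induction with
    | base => exact hspec
    | succ n hn ihn =>
      by_cases hcase : n < p.length
      · exact chain_step hdist s1 s2 v p hinv n hcase ihn
      · have : p.length ≤ n + 1 := by omega
        rw [SimpleGraph.Walk.getVert_of_length_le p this]; exact h2
  refine ⟨m, hm0, hmlen, ?_, ?_⟩
  · intro i h him
    rw [support_get_eq_getVert]
    have hnot : ¬ dist s2 (p.getVert i) < dist s1 (p.getVert i) := Nat.find_min hex him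
    have hne : dist s1 (p.getVert i) ≠ dist s2 (p.getVert i) := by
      apply hties
      rw [SimpleGraph.Walk.mem_support_iff_exists_getVert]
      exact ⟨i, rfl, by have := p.length_support; omega⟩
    exact lt_of_le_of_ne (not_lt.mp hnot) hne
  · intro i h him
    rw [support_get_eq_getVert]
    exact hQup i him
end

section
/- Let G be a weighted undirected graph with a finite set S of sites carrying additive weights, with all additively weighted site-to-vertex distances pairwise distinct. Then for every site s, the Voronoi cell Vor(s) induces a connected subgraph of G (assuming s ∈ Vor(s)). -/
/-- The additively weighted Voronoi cell of a site `s` among the sites `S`. -/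
def Vor {V : Type} (dist : V → V → ℝ) (S : Finset V) (ω : V → ℝ) (s : V) : Set V :=
  {v | ∀ t ∈ S, t ≠ s → ω s + dist s v < ω t + dist t v}

lemma reach_in_induce {V : Type} {G : SimpleGraph V} {A : Set V} {a b : V} (p : G.Walk a b)
    (hp : ∀ u ∈ p.support, u ∈ A) :
    (G.induce A).Reachable ⟨a, hp a p.start_mem_support⟩ ⟨b, hp b p.end_mem_support⟩ := by
  induction p with
  | nil => exact SimpleGraph.Reachable.refl _
  | @cons u v c h q ih =>
      have hv : v ∈ A := hp v (by simp)
      have h1 : (G.induce A).Adj ⟨u, hp u (by simp)⟩ ⟨v, hv⟩ := h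
      exact h1.reachable.trans (ih fun x hx => hp x (by simp [hx]))

/-- With pairwise distinct additively weighted distances and positive edge weights, each
Voronoi cell containing its own site induces a connected subgraph of `G`. -/
theorem stmt8 {V : Type} (G : SimpleGraph V) (w : Sym2 V → ℝ)
    (hw : ∀ e, 0 < w e)
    (dist : V → V → ℝ)
    (hdist : ∀ a b : V, IsLeast {x : ℝ | ∃ p : G.Walk a b, walkWeight w p = x} (dist a b))
    (S : Finset V) (ω : V → ℝ) (hω : ∀ s ∈ S, 0 ≤ ω s)
    (hties : ∀ v : V, ∀ s ∈ S, ∀ t ∈ S, s ≠ t → ω s + dist s v ≠ ω t + dist t v)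
    (s : V) (hs : s ∈ S) (hself : s ∈ Vor dist S ω s) :
    (G.induce (Vor dist S ω s)).Connected := by
  classical
  -- basic facts about dist
  have hle : ∀ (a b : V) (p : G.Walk a b), dist a b ≤ walkWeight w p := by
    intro a b p
    exact (hdist a b).2 ⟨p, rfl⟩
  have htri : ∀ a b c : V, dist a c ≤ dist a b + dist b c := by
    intro a b c
    obtain ⟨p, hp⟩ := (hdist a b).1
    obtain ⟨q, hq⟩ := (hdist b c).1
    calc dist a c ≤ walkWeight w (p.append q) := hle a c _
      _ = dist a b + dist b c := by rw [walkWeight_append, hp, hq]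
  -- every vertex of a shortest walk from s to a point of Vor lies in Vor
  have key : ∀ v ∈ Vor dist S ω s, ∃ p : G.Walk s v, ∀ u ∈ p.support, u ∈ Vor dist S ω s := by
    intro v hv
    obtain ⟨p, hp⟩ := (hdist s v).1
    refine ⟨p, fun u hu => ?_⟩
    intro t ht hts
    have hsplit := p.take_spec hu
    have h1 : dist s u ≤ walkWeight w (p.takeUntil u hu) := hle s u _
    have h2 : dist u v ≤ walkWeight w (p.dropUntil u hu) := hle u v _
    have hsum : dist s u + dist u v ≤ dist s v := by
      have := walkWeight_append w (p.takeUntil u hu) (p.dropUntil u hu)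
      rw [hsplit, hp] at this
      linarith
    have hvor : ω s + dist s v < ω t + dist t v := hv t ht hts
    have htv : dist t v ≤ dist t u + dist u v := htri t u v
    linarith
  haveI : Nonempty (Vor dist S ω s) := ⟨⟨s, hself⟩⟩
  refine ⟨fun a b => ?_⟩
  · 
    obtain ⟨va, hva⟩ := a
    obtain ⟨vb, hvb⟩ := b
    obtain ⟨pa, hpa⟩ := key va hva
    obtain ⟨pb, hpb⟩ := key vb hvb
    have ra := reach_in_induce pa hpa
    have rb := reach_in_induce pb hpb
    exact (ra.symm.trans rb)
end
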